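/- arXiv:1905.01840 — 6 statements merged into one kernel-verified Lean document; each statement's English description precedes it below -/
import Mathlib

section
/- Let v ∈ ℝ^n with ‖v‖_2 ≤ 1 satisfy V_-(v) ≤ (v_1 - v_n) + γ for some γ ≥ 0 (i.e., condition with sign w = 1). Write v = v^+ - v^- with v^+_1 = 0, v^+_i = Σ_{j=2}^i (v_j - v_{j-1})_+ and v^-_i = -v_1 + Σ_{j=2}^i (v_{j-1} - v_j)_+. Then v^+_n ≤ γ, ‖v^+‖_2 ≤ γ√(n-1), and ‖v^-‖_2 ≤ 1 + γ√(n-1). -/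
/-- If `‖v‖₂ ≤ 1` and `V₋(v) ≤ (v 0 - v (n-1)) + γ` with `γ ≥ 0`, then writing
`v = v⁺ - v⁻` (with `v⁺ i = ∑_{j<i}(v (j+1) - v j)₊` and
`v⁻ i = -v 0 + ∑_{j<i}(v j - v (j+1))₊`) we have `v⁺ (n-1) ≤ γ`,
`‖v⁺‖₂ ≤ γ √(n-1)` and `‖v⁻‖₂ ≤ 1 + γ √(n-1)`. -/
theorem stmt_4 (n : ℕ) (hn : 2 ≤ n) (v vp vm : ℕ → ℝ) (γ : ℝ) (hγ : 0 ≤ γ)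
    (hnorm : Real.sqrt (∑ i ∈ Finset.range n, (v i) ^ 2) ≤ 1)
    (hcond : ∑ i ∈ Finset.range (n - 1), max (v i - v (i + 1)) 0 ≤ (v 0 - v (n - 1)) + γ)
    (hvp : ∀ i, vp i = ∑ j ∈ Finset.range i, max (v (j + 1) - v j) 0)
    (hvm : ∀ i, vm i = -v 0 + ∑ j ∈ Finset.range i, max (v j - v (j + 1)) 0) :
    vp (n - 1) ≤ γ ∧
    Real.sqrt (∑ i ∈ Finset.range n, (vp i) ^ 2) ≤ γ * Real.sqrt ((n : ℝ) - 1) ∧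
    Real.sqrt (∑ i ∈ Finset.range n, (vm i) ^ 2) ≤ 1 + γ * Real.sqrt ((n : ℝ) - 1) := by
  have hmax : ∀ a : ℝ, max a 0 = max (-a) 0 + a := by
    intro a
    rcases le_total a 0 with h | h
    · rw [max_eq_right h, max_eq_left (by linarith)]; ring
    · rw [max_eq_left h, max_eq_right (by linarith)]; ring
  have key : ∀ i, ∑ j ∈ Finset.range i, max (v (j + 1) - v j) 0
      = (∑ j ∈ Finset.range i, max (v j - v (j + 1)) 0) + (v i - v 0) := by
    intro i
    rw [← Finset.sum_range_sub (fun k => v k), ← Finset.sum_add_distrib]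
    apply Finset.sum_congr rfl
    intro j _
    have := hmax (v (j + 1) - v j)
    rw [neg_sub] at this
    linarith
  -- Part 1
  have h1 : vp (n - 1) ≤ γ := by
    rw [hvp, key]
    linarith
  -- vp properties
  have hvpnn : ∀ i, 0 ≤ vp i := by
    intro i; rw [hvp]
    exact Finset.sum_nonneg fun j _ => le_max_right _ _
  have hvpγ : ∀ i, i ≤ n - 1 → vp i ≤ γ := by
    intro i hi
    refine le_trans ?_ h1
    rw [hvp, hvp]
    exact Finset.sum_le_sum_of_subset_of_nonneg (Finset.range_subset_range.2 hi)
      (fun j _ _ => le_max_right _ _)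
  have hn1 : (0:ℝ) ≤ (n : ℝ) - 1 := by
    have : (2:ℝ) ≤ n := by exact_mod_cast hn
    linarith
  -- sum of vp squares
  have hsum_vp : ∑ i ∈ Finset.range n, (vp i) ^ 2 ≤ ((n : ℝ) - 1) * γ ^ 2 := by
    obtain ⟨m, hm⟩ : ∃ m, n = m + 1 := ⟨n - 1, by omega⟩
    subst hm
    rw [Finset.sum_range_succ']
    have h0 : vp 0 = 0 := by rw [hvp]; simp
    have hle : ∑ i ∈ Finset.range m, vp (i + 1) ^ 2 ≤ ∑ _i ∈ Finset.range m, γ ^ 2 := by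
      apply Finset.sum_le_sum
      intro i hi
      have hi' := Finset.mem_range.mp hi
      have : vp (i + 1) ≤ γ := hvpγ _ (by omega)
      exact pow_le_pow_left₀ (hvpnn _) this 2
    rw [h0]
    simp only [Finset.sum_const, Finset.card_range, nsmul_eq_mul] at hle
    push_cast
    nlinarith
  have hA : Real.sqrt (∑ i ∈ Finset.range n, (vp i) ^ 2) ≤ γ * Real.sqrt ((n : ℝ) - 1) := by
    calc Real.sqrt (∑ i ∈ Finset.range n, (vp i) ^ 2)
        ≤ Real.sqrt (((n : ℝ) - 1) * γ ^ 2) := Real.sqrt_le_sqrt hsum_vp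
      _ = γ * Real.sqrt ((n : ℝ) - 1) := by
          rw [Real.sqrt_mul hn1, Real.sqrt_sq hγ]; ring
  refine ⟨h1, hA, ?_⟩
  -- Part 3
  have hvm_eq : ∀ i, vm i = vp i - v i := by
    intro i
    have := key i
    rw [hvm, hvp]
    linarith
  have hAnn : (0:ℝ) ≤ ∑ i ∈ Finset.range n, (vp i) ^ 2 :=
    Finset.sum_nonneg fun i _ => sq_nonneg _
  have hBnn : (0:ℝ) ≤ ∑ i ∈ Finset.range n, (v i) ^ 2 :=
    Finset.sum_nonneg fun i _ => sq_nonneg _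
  have hcs : (∑ i ∈ Finset.range n, vp i * v i) ^ 2
      ≤ (∑ i ∈ Finset.range n, (vp i) ^ 2) * (∑ i ∈ Finset.range n, (v i) ^ 2) :=
    Finset.sum_mul_sq_le_sq_mul_sq _ _ _
  have habs : |∑ i ∈ Finset.range n, vp i * v i|
      ≤ Real.sqrt (∑ i ∈ Finset.range n, (vp i) ^ 2) *
        Real.sqrt (∑ i ∈ Finset.range n, (v i) ^ 2) := by
    calc |∑ i ∈ Finset.range n, vp i * v i|
        = Real.sqrt ((∑ i ∈ Finset.range n, vp i * v i) ^ 2) := (Real.sqrt_sq_eq_abs _).symm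
      _ ≤ Real.sqrt ((∑ i ∈ Finset.range n, (vp i) ^ 2) * (∑ i ∈ Finset.range n, (v i) ^ 2)) :=
          Real.sqrt_le_sqrt hcs
      _ = _ := Real.sqrt_mul hAnn _
  have hexp : ∑ i ∈ Finset.range n, (vm i) ^ 2
      = (∑ i ∈ Finset.range n, (vp i) ^ 2) - 2 * (∑ i ∈ Finset.range n, vp i * v i)
        + (∑ i ∈ Finset.range n, (v i) ^ 2) := by
    rw [Finset.mul_sum, ← Finset.sum_sub_distrib, ← Finset.sum_add_distrib]
    exact Finset.sum_congr rfl fun i _ => by rw [hvm_eq]; ring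
  have hsq : ∑ i ∈ Finset.range n, (vm i) ^ 2
      ≤ (Real.sqrt (∑ i ∈ Finset.range n, (vp i) ^ 2)
          + Real.sqrt (∑ i ∈ Finset.range n, (v i) ^ 2)) ^ 2 := by
    have hA2 : Real.sqrt (∑ i ∈ Finset.range n, (vp i) ^ 2) ^ 2
        = ∑ i ∈ Finset.range n, (vp i) ^ 2 := Real.sq_sqrt hAnn
    have hB2 : Real.sqrt (∑ i ∈ Finset.range n, (v i) ^ 2) ^ 2
        = ∑ i ∈ Finset.range n, (v i) ^ 2 := Real.sq_sqrt hBnn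
    have := abs_le.mp habs
    rw [hexp]
    nlinarith
  calc Real.sqrt (∑ i ∈ Finset.range n, (vm i) ^ 2)
      ≤ Real.sqrt ((Real.sqrt (∑ i ∈ Finset.range n, (vp i) ^ 2)
          + Real.sqrt (∑ i ∈ Finset.range n, (v i) ^ 2)) ^ 2) := Real.sqrt_le_sqrt hsq
    _ = Real.sqrt (∑ i ∈ Finset.range n, (vp i) ^ 2)
          + Real.sqrt (∑ i ∈ Finset.range n, (v i) ^ 2) := Real.sqrt_sq (by positivity)
    _ ≤ γ * Real.sqrt ((n : ℝ) - 1) + 1 := add_le_add hA hnorm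
    _ = 1 + γ * Real.sqrt ((n : ℝ) - 1) := by ring
end

section
/- Let f : ℝ^n → ℝ be convex, λ ≥ 0, σ > 0, and y ∈ ℝ^n. Let θ̂ be the unique minimizer of θ ↦ (1/2)‖y - θ‖_2² + σλ f(θ). Then for any θ ∈ ℝ^n and any subgradient v ∈ ∂f(θ), writing y = θ* + σz, the deterministic inequality ‖θ̂ - θ*‖_2² - ‖θ - θ*‖_2² ≤ σ² ‖λv - z‖_2² holds; consequently ‖θ̂ - θ*‖_2² - ‖θ - θ*‖_2² ≤ σ² dist²(z, λ ∂f(θ)). -/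
open Metric
set_option maxHeartbeats 1000000

private lemma aux_norm_ineq {E : Type*} [NormedAddCommGroup E] [InnerProductSpace ℝ E]
    (a b w : E) (h : (inner ℝ (a - w) (a - b) : ℝ) ≤ 0) :
    ‖a‖ ^ 2 - ‖b‖ ^ 2 ≤ ‖w‖ ^ 2 := by
  have e1 : ‖a - b‖ ^ 2 = ‖a‖ ^ 2 - 2 * (inner ℝ a b : ℝ) + ‖b‖ ^ 2 := norm_sub_sq_real a b
  have e2 : (0:ℝ) ≤ ‖a - b - w‖ ^ 2 := sq_nonneg _
  have e3 : ‖a - b - w‖ ^ 2 = ‖a - b‖ ^ 2 - 2 * (inner ℝ (a - b) w : ℝ) + ‖w‖ ^ 2 :=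
    norm_sub_sq_real (a - b) w
  have e4 : (inner ℝ (a - w) (a - b) : ℝ) =
      ‖a‖ ^ 2 - (inner ℝ a b : ℝ) - (inner ℝ (a - b) w : ℝ) := by
    simp only [inner_sub_left, inner_sub_right, real_inner_self_eq_norm_sq,
      real_inner_comm w a, real_inner_comm w b]
    ring
  nlinarith

/-- Let `f : ℝ^n → ℝ` be convex, `λ ≥ 0`, `σ > 0`, and let `θ̂` minimize
`θ ↦ ½‖y - θ‖² + σ λ f(θ)`.  Then for any `θ` and any subgradient
`v ∈ ∂f(θ)`, writing `y = θ* + σ z`, we have the deterministic inequality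
`‖θ̂ - θ*‖² - ‖θ - θ*‖² ≤ σ² ‖λ v - z‖²`, and consequently
`‖θ̂ - θ*‖² - ‖θ - θ*‖² ≤ σ² dist²(z, λ ∂f(θ))`. -/
theorem stmt_10 (n : ℕ) (f : EuclideanSpace ℝ (Fin n) → ℝ)
    (hf : ConvexOn ℝ Set.univ f) (lam σ : ℝ) (hlam : 0 ≤ lam) (hσ : 0 < σ)
    (y θstar z θhat θ v : EuclideanSpace ℝ (Fin n))
    (hy : y = θstar + σ • z)
    (hmin : ∀ x, (1 / 2) * ‖y - θhat‖ ^ 2 + σ * lam * f θhat ≤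
      (1 / 2) * ‖y - x‖ ^ 2 + σ * lam * f x)
    (hv : ∀ x, f θ + (inner ℝ v (x - θ) : ℝ) ≤ f x) :
    ‖θhat - θstar‖ ^ 2 - ‖θ - θstar‖ ^ 2 ≤ σ ^ 2 * ‖lam • v - z‖ ^ 2 ∧
    ‖θhat - θstar‖ ^ 2 - ‖θ - θstar‖ ^ 2 ≤
      σ ^ 2 * (Metric.infDist z
        {u : EuclideanSpace ℝ (Fin n) |
          ∃ s, (∀ x, f θ + (inner ℝ s (x - θ) : ℝ) ≤ f x) ∧ u = lam • s}) ^ 2 := by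
  -- first-order optimality
  have key : (inner ℝ (y - θhat) (θ - θhat) : ℝ) ≤ σ * lam * (f θ - f θhat) := by
    rw [← sub_nonpos]
    refine le_of_forall_pos_le_add (fun ε hε => ?_)
    set B : ℝ := ‖θ - θhat‖ ^ 2 with hB
    have hB0 : 0 ≤ B := sq_nonneg _
    set t : ℝ := min 1 (2 * ε / (B + 1)) with ht
    have ht0 : 0 < t := lt_min one_pos (by positivity)
    have ht1 : t ≤ 1 := min_le_left _ _
    have ht2 : t ≤ 2 * ε / (B + 1) := min_le_right _ _
    have hxeq : θhat + t • (θ - θhat) = (1 - t) • θhat + t • θ := by module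
    have hconv : f ((1 - t) • θhat + t • θ) ≤ (1 - t) * f θhat + t * f θ :=
      hf.2 (Set.mem_univ θhat) (Set.mem_univ θ) (by linarith) ht0.le (by ring)
    have hm := hmin (θhat + t • (θ - θhat))
    rw [hxeq] at hm
    have hnorm : ‖y - (θhat + t • (θ - θhat))‖ ^ 2 =
        ‖y - θhat‖ ^ 2 - 2 * t * (inner ℝ (y - θhat) (θ - θhat) : ℝ) + t ^ 2 * B := by
      have h1 : y - (θhat + t • (θ - θhat)) = (y - θhat) - t • (θ - θhat) := by abel
      rw [h1, norm_sub_sq_real, real_inner_smul_right, norm_smul]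
      simp [mul_pow, abs_of_pos ht0]
      ring
    rw [hxeq] at hnorm
    have hsl : 0 ≤ σ * lam := mul_nonneg hσ.le hlam
    have h2 : t * ((inner ℝ (y - θhat) (θ - θhat) : ℝ) - σ * lam * (f θ - f θhat)) ≤
        (1/2) * t ^ 2 * B := by nlinarith [mul_le_mul_of_nonneg_left hconv hsl]
    have h3 : (inner ℝ (y - θhat) (θ - θhat) : ℝ) - σ * lam * (f θ - f θhat) ≤
        (1/2) * t * B := by
      have := (mul_le_mul_iff_right₀ ht0).mp (by nlinarith : t * ((inner ℝ (y - θhat) (θ - θhat) : ℝ) - σ * lam * (f θ - f θhat)) ≤ t * ((1/2) * t * B))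
      linarith
    have h4 : (1/2) * t * B ≤ ε := by
      have : t * B ≤ (2 * ε / (B + 1)) * B :=
        mul_le_mul_of_nonneg_right ht2 hB0
      have h5 : (2 * ε / (B + 1)) * B ≤ 2 * ε := by
        rw [div_mul_eq_mul_div, div_le_iff₀ (by linarith)]
        nlinarith
      linarith
    linarith
  -- main deterministic inequality, for an arbitrary subgradient s
  have main : ∀ s : EuclideanSpace ℝ (Fin n),
      (∀ x, f θ + (inner ℝ s (x - θ) : ℝ) ≤ f x) →
      ‖θhat - θstar‖ ^ 2 - ‖θ - θstar‖ ^ 2 ≤ σ ^ 2 * ‖lam • s - z‖ ^ 2 := by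
    intro s hs
    have hsub : f θ - f θhat ≤ (inner ℝ s (θ - θhat) : ℝ) := by
      have := hs θhat
      have h0 : (inner ℝ s (θhat - θ) : ℝ) = -(inner ℝ s (θ - θhat) : ℝ) := by
        rw [← inner_neg_right]; congr 1; abel
      rw [h0] at this; linarith
    have hkey2 : (inner ℝ (y - θhat) (θ - θhat) : ℝ) ≤
        σ * lam * (inner ℝ s (θ - θhat) : ℝ) := by
      have := mul_le_mul_of_nonneg_left hsub (mul_nonneg hσ.le hlam)
      linarith
    have hinner : (inner ℝ ((θhat - θstar) - σ • (z - lam • s)) ((θhat - θstar) - (θ - θstar)) : ℝ) ≤ 0 := by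
      have hvec : (θhat - θstar) - σ • (z - lam • s) = -(y - θhat) + (σ * lam) • s := by
        rw [hy]; module
      have hab2 : (θhat - θstar) - (θ - θstar) = -(θ - θhat) := by module
      have hexp : (inner ℝ ((θhat - θstar) - σ • (z - lam • s)) ((θhat - θstar) - (θ - θstar)) : ℝ) =
          (inner ℝ (y - θhat) (θ - θhat) : ℝ) - σ * lam * (inner ℝ s (θ - θhat) : ℝ) := by
        rw [hvec, hab2, inner_add_left, inner_neg_left, inner_neg_right, inner_neg_right,
          real_inner_smul_left]
        ring
      rw [hexp]
      linarith
    have := aux_norm_ineq (θhat - θstar) (θ - θstar) (σ • (z - lam • s)) hinner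
    have hwnorm : ‖σ • (z - lam • s)‖ ^ 2 = σ ^ 2 * ‖lam • s - z‖ ^ 2 := by
      rw [norm_smul]
      have : ‖z - lam • s‖ = ‖lam • s - z‖ := norm_sub_rev _ _
      rw [this, mul_pow]
      simp [abs_of_pos hσ, sq_abs]
    rw [hwnorm] at this
    exact this
  have h1 := main v hv
  refine ⟨h1, ?_⟩
  set S := {u : EuclideanSpace ℝ (Fin n) |
      ∃ s, (∀ x, f θ + (inner ℝ s (x - θ) : ℝ) ≤ f x) ∧ u = lam • s} with hS
  have hSne : S.Nonempty := ⟨lam • v, v, hv, rfl⟩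
  set L := ‖θhat - θstar‖ ^ 2 - ‖θ - θstar‖ ^ 2 with hL
  have hD0 : 0 ≤ infDist z S := infDist_nonneg
  by_cases hL0 : L ≤ 0
  · have : 0 ≤ σ ^ 2 * (infDist z S) ^ 2 := by positivity
    linarith
  · push_neg at hL0
    have hbound : Real.sqrt L / σ ≤ infDist z S := by
      rw [← not_lt]
      intro hcontra
      obtain ⟨u, huS, hu⟩ := (infDist_lt_iff hSne).mp hcontra
      obtain ⟨s, hs, rfl⟩ := huS
      have hb := main s hs
      have hdist : dist z (lam • s) = ‖lam • s - z‖ := by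
        rw [dist_eq_norm, norm_sub_rev]
      rw [hdist] at hu
      have h5 : Real.sqrt L ≤ σ * ‖lam • s - z‖ := by
        rw [show σ * ‖lam • s - z‖ = Real.sqrt ((σ * ‖lam • s - z‖)^2) by
          rw [Real.sqrt_sq (by positivity)]]
        apply Real.sqrt_le_sqrt
        nlinarith
      rw [lt_div_iff₀ hσ] at hu
      nlinarith
    have hq0 : 0 ≤ Real.sqrt L / σ := by positivity
    have h6 : (Real.sqrt L / σ) ^ 2 ≤ (infDist z S) ^ 2 := by
      apply sq_le_sq' <;> linarith
    have h7 : (Real.sqrt L / σ) ^ 2 = L / σ ^ 2 := by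
      rw [div_pow, Real.sq_sqrt hL0.le]
    rw [h7] at h6
    rw [div_le_iff₀ (by positivity)] at h6
    linarith [h6]
end

section
/- Let K ⊆ ℝ^n be a closed convex set, θ ∈ ℝ^n with V_-(θ) = V, and let K_-(V) := {z ∈ ℝ^n : V_-(z) ≤ V}. Let Π = (B_1, …, B_{k'}) be a connected partition refining the constant partition of θ, with pieces B_i = {τ_i, …, τ_{i+1}-1}, and signs w_i ∈ {0,1} satisfying w_i = 1 if θ_{τ_i - 1} > θ_{τ_i}, w_i = 0 if θ_{τ_i - 1} < θ_{τ_i} (arbitrary if equal). Then the tangent cone of K_-(V) at θ is contained in T(Π, w) := {v ∈ ℝ^n : Σ_{i=1}^{k'} V_-^{B_i}(v_{B_i}) ≤ Σ_{i=2}^{k'} w_i (v_{τ_i} - v_{τ_i - 1})}. -/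
open Finset

private lemma tau_mono {k' : ℕ} {τ : ℕ → ℕ} (hτmono : ∀ i < k', τ i < τ (i + 1)) :
    ∀ a b, a ≤ b → b ≤ k' → τ a ≤ τ b := by
  intro a b hab hbk
  induction b with
  | zero =>
    have : a = 0 := Nat.le_zero.mp hab
    simp [this]
  | succ b ih =>
    rcases Nat.lt_or_ge a (b + 1) with h | h
    · have h1 : τ a ≤ τ b := ih (Nat.lt_succ_iff.mp h) (by omega)
      exact le_trans h1 (le_of_lt (hτmono b (by omega)))
    · have : a = b + 1 := le_antisymm hab h
      simp [this]

private lemma decomp {n k' : ℕ} (hk : 1 ≤ k') {τ : ℕ → ℕ} (hτ0 : τ 0 = 0) (hτk : τ k' = n)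
    (hτmono : ∀ i < k', τ i < τ (i + 1)) (f : ℕ → ℝ) :
    ∑ j ∈ range (n - 1), f j
      = ∑ i ∈ range k', ∑ j ∈ Ico (τ i) (τ (i + 1) - 1), f j
        + ∑ i ∈ Ico 1 k', f (τ i - 1) := by
  have hτpos : ∀ i, 1 ≤ i → i ≤ k' → 1 ≤ τ i := by
    intro i h1 h2
    have h3 := tau_mono hτmono 1 i h1 h2
    have h4 : 0 < τ 1 := by simpa [hτ0] using hτmono 0 (by omega)
    omega
  have key : ∀ m, 1 ≤ m → m ≤ k' →
      ∑ i ∈ range m, ∑ j ∈ Ico (τ i) (τ (i + 1) - 1), f j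
        + ∑ i ∈ Ico 1 m, f (τ i - 1) = ∑ j ∈ range (τ m - 1), f j := by
    intro m
    induction m with
    | zero => intro h; omega
    | succ m ih =>
      intro _ hmk
      rcases Nat.eq_zero_or_pos m with hm | hm
      · subst hm
        simp [sum_range_succ, hτ0, ← range_eq_Ico]
      · have hmk' : m < k' := hmk
        have H := ih hm (le_of_lt hmk')
        have h1 : 1 ≤ τ m := hτpos m hm (le_of_lt hmk')
        have h2 : τ m < τ (m + 1) := hτmono m hmk'
        rw [sum_range_succ, Finset.sum_Ico_succ_top hm]
        have e1 : ∑ j ∈ range (τ m - 1), f j + f (τ m - 1) = ∑ j ∈ range (τ m), f j := by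
          obtain ⟨u, hu⟩ : ∃ u, τ m = u + 1 := ⟨τ m - 1, by omega⟩
          simp only [hu, Nat.add_sub_cancel, sum_range_succ]
        have e2 : ∑ j ∈ range (τ m), f j + ∑ j ∈ Ico (τ m) (τ (m + 1) - 1), f j
            = ∑ j ∈ range (τ (m + 1) - 1), f j := by
          simp only [range_eq_Ico]
          exact Finset.sum_Ico_consecutive f (Nat.zero_le _) (by omega)
        calc ∑ i ∈ range m, ∑ j ∈ Ico (τ i) (τ (i + 1) - 1), f j
              + ∑ j ∈ Ico (τ m) (τ (m + 1) - 1), f j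
              + (∑ i ∈ Ico 1 m, f (τ i - 1) + f (τ m - 1))
            = (∑ i ∈ range m, ∑ j ∈ Ico (τ i) (τ (i + 1) - 1), f j
                + ∑ i ∈ Ico 1 m, f (τ i - 1)) + f (τ m - 1)
                + ∑ j ∈ Ico (τ m) (τ (m + 1) - 1), f j := by ring
          _ = ∑ j ∈ range (τ m - 1), f j + f (τ m - 1)
                + ∑ j ∈ Ico (τ m) (τ (m + 1) - 1), f j := by rw [H]
          _ = ∑ j ∈ range (τ m), f j + ∑ j ∈ Ico (τ m) (τ (m + 1) - 1), f j := by rw [e1]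
          _ = ∑ j ∈ range (τ (m + 1) - 1), f j := e2
  have := key k' hk le_rfl
  rw [hτk] at this
  linarith

/-- Let `θ ∈ ℝ^n` with lower total variation `V₋(θ) = V`, and let
`K₋(V) = {z : V₋(z) ≤ V}`.  Let `τ 0 = 0 < τ 1 < ⋯ < τ k' = n` be the
breakpoints of a connected partition refining the constant partition of `θ`
(i.e. `θ` is constant on each piece `B i = {τ i, …, τ (i+1) - 1}`), with signs
`w i ∈ {0,1}` such that `w i = 1` if `θ (τ i - 1) > θ (τ i)` and `w i = 0` if
`θ (τ i - 1) < θ (τ i)` (arbitrary if equal). Then the tangent cone of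
`K₋(V)` at `θ` (the closure of `{t (z - θ) : t ≥ 0, z ∈ K₋(V)}`) is contained
in `T(Π, w) = {v : ∑ᵢ V₋^{B i}(v) ≤ ∑_{i=1}^{k'-1} w i (v (τ i) - v (τ i - 1))}`. -/
theorem stmt_11 (n k' : ℕ) (hn : 1 ≤ n) (hk : 1 ≤ k') (θ : ℕ → ℝ) (V : ℝ)
    (hV : ∑ i ∈ Finset.range (n - 1), max (θ i - θ (i + 1)) 0 = V)
    (τ : ℕ → ℕ) (hτ0 : τ 0 = 0) (hτk : τ k' = n) (hτmono : ∀ i < k', τ i < τ (i + 1))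
    (hconst : ∀ i < k', ∀ a, τ i ≤ a → a < τ (i + 1) → θ a = θ (τ i))
    (w : ℕ → ℝ) (hw01 : ∀ i, w i = 0 ∨ w i = 1)
    (hwsgn : ∀ i, 1 ≤ i → i < k' →
      (θ (τ i - 1) > θ (τ i) → w i = 1) ∧ (θ (τ i - 1) < θ (τ i) → w i = 0)) :
    closure {v : ℕ → ℝ | ∃ t : ℝ, 0 ≤ t ∧ ∃ z : ℕ → ℝ,
        (∑ i ∈ Finset.range (n - 1), max (z i - z (i + 1)) 0) ≤ V ∧ v = t • (z - θ)}
      ⊆ {v : ℕ → ℝ |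
          ∑ i ∈ Finset.range k',
              ∑ j ∈ Finset.Ico (τ i) (τ (i + 1) - 1), max (v j - v (j + 1)) 0
            ≤ ∑ i ∈ Finset.Ico 1 k', w i * (v (τ i) - v (τ i - 1))} := by
  have hτpos : ∀ i, 1 ≤ i → i ≤ k' → 1 ≤ τ i := by
    intro i h1 h2
    have h3 := tau_mono hτmono 1 i h1 h2
    have h4 : 0 < τ 1 := by simpa [hτ0] using hτmono 0 (by omega)
    omega
  apply closure_minimal
  · rintro v ⟨t, ht, z, hz, rfl⟩
    simp only [Set.mem_setOf_eq, Pi.smul_apply, Pi.sub_apply, smul_eq_mul]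
    -- rewrite LHS
    have hLHS : ∑ i ∈ range k', ∑ j ∈ Ico (τ i) (τ (i + 1) - 1),
          max (t * (z j - θ j) - t * (z (j + 1) - θ (j + 1))) 0
        = t * ∑ i ∈ range k', ∑ j ∈ Ico (τ i) (τ (i + 1) - 1),
            max (z j - z (j + 1)) 0 := by
      rw [mul_sum]
      refine sum_congr rfl fun i hi => ?_
      rw [mul_sum]
      refine sum_congr rfl fun j hj => ?_
      rw [mem_range] at hi
      rw [mem_Ico] at hj
      have e1 : θ j = θ (τ i) := hconst i hi j hj.1 (by omega)
      have e2 : θ (j + 1) = θ (τ i) := hconst i hi (j + 1) (by omega) (by omega)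
      rw [e1, e2]
      have e3 : t * (z j - θ (τ i)) - t * (z (j + 1) - θ (τ i))
          = t * (z j - z (j + 1)) := by ring
      rw [e3, mul_max_of_nonneg _ _ ht, mul_zero]
    have hRHS : ∑ i ∈ Ico 1 k', w i *
          (t * (z (τ i) - θ (τ i)) - t * (z (τ i - 1) - θ (τ i - 1)))
        = t * ∑ i ∈ Ico 1 k', w i *
            ((z (τ i) - θ (τ i)) - (z (τ i - 1) - θ (τ i - 1))) := by
      rw [mul_sum]
      exact sum_congr rfl fun i _ => by ring
    rw [hLHS, hRHS]
    refine mul_le_mul_of_nonneg_left ?_ ht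
    -- core inequality
    have dz := decomp hk hτ0 hτk hτmono (fun j => max (z j - z (j + 1)) 0)
    have dθ := decomp hk hτ0 hτk hτmono (fun j => max (θ j - θ (j + 1)) 0)
    have hzfix : ∑ i ∈ Ico 1 k', max (z (τ i - 1) - z (τ i - 1 + 1)) 0
        = ∑ i ∈ Ico 1 k', max (z (τ i - 1) - z (τ i)) 0 := by
      refine sum_congr rfl fun i hi => ?_
      rw [mem_Ico] at hi
      rw [Nat.sub_add_cancel (hτpos i hi.1 (le_of_lt hi.2))]
    have hθfix : ∑ i ∈ Ico 1 k', max (θ (τ i - 1) - θ (τ i - 1 + 1)) 0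
        = ∑ i ∈ Ico 1 k', max (θ (τ i - 1) - θ (τ i)) 0 := by
      refine sum_congr rfl fun i hi => ?_
      rw [mem_Ico] at hi
      rw [Nat.sub_add_cancel (hτpos i hi.1 (le_of_lt hi.2))]
    rw [hzfix] at dz
    rw [hθfix] at dθ
    have hθint : ∑ i ∈ range k', ∑ j ∈ Ico (τ i) (τ (i + 1) - 1),
        max (θ j - θ (j + 1)) 0 = 0 := by
      refine sum_eq_zero fun i hi => sum_eq_zero fun j hj => ?_
      rw [mem_range] at hi
      rw [mem_Ico] at hj
      have e1 : θ j = θ (τ i) := hconst i hi j hj.1 (by omega)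
      have e2 : θ (j + 1) = θ (τ i) := hconst i hi (j + 1) (by omega) (by omega)
      rw [e1, e2]
      simp
    rw [hθint, zero_add] at dθ
    -- V = ∑ max (θ (τ i - 1) - θ (τ i)) 0
    have hVeq : ∑ i ∈ Ico 1 k', max (θ (τ i - 1) - θ (τ i)) 0 = V := by
      rw [← dθ, hV]
    have hterm : ∑ i ∈ Ico 1 k',
          (max (θ (τ i - 1) - θ (τ i)) 0 - max (z (τ i - 1) - z (τ i)) 0)
        ≤ ∑ i ∈ Ico 1 k', w i *
            ((z (τ i) - θ (τ i)) - (z (τ i - 1) - θ (τ i - 1))) := by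
      refine sum_le_sum fun i hi => ?_
      rw [mem_Ico] at hi
      have hs := hwsgn i hi.1 hi.2
      rcases hw01 i with h | h
      · have ha : θ (τ i - 1) ≤ θ (τ i) := by
          by_contra hgt
          have := hs.1 (lt_of_not_ge hgt)
          rw [h] at this; norm_num at this
        have h1 : max (θ (τ i - 1) - θ (τ i)) 0 = 0 := max_eq_right (by linarith)
        have h2 : (0 : ℝ) ≤ max (z (τ i - 1) - z (τ i)) 0 := le_max_right _ _
        rw [h, h1, zero_mul]
        linarith
      · have ha : θ (τ i) ≤ θ (τ i - 1) := by
          by_contra hlt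
          have := hs.2 (lt_of_not_ge hlt)
          rw [h] at this; norm_num at this
        have h1 : max (θ (τ i - 1) - θ (τ i)) 0 = θ (τ i - 1) - θ (τ i) :=
          max_eq_left (by linarith)
        have h2 : z (τ i - 1) - z (τ i) ≤ max (z (τ i - 1) - z (τ i)) 0 := le_max_left _ _
        rw [h, one_mul, h1]
        linarith
    rw [sum_sub_distrib] at hterm
    linarith
  · exact isClosed_le
      (continuous_finset_sum _ fun i _ => continuous_finset_sum _ fun j _ =>
        (((continuous_apply j).sub (continuous_apply (j + 1))).max continuous_const))
      (continuous_finset_sum _ fun i _ => continuous_const.mul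
        ((continuous_apply (τ i)).sub (continuous_apply (τ i - 1))))
end

section
/- Let θ ∈ ℝ^n with V_-(θ) = V and let Π = (B_1,…,B_k) be exactly the constant partition of θ with signs w as in the definition. Then the cone T(Π, w) := {v : Σ_i V_-^{B_i}(v_{B_i}) ≤ Σ_{i=2}^{k} w_i (v_{τ_i} - v_{τ_i-1})} is contained in the tangent cone of K_-(V) := {z : V_-(z) ≤ V} at θ; i.e., for every v ∈ T(Π, w) there exists t > 0 such that θ + t v ∈ K_-(V). -/
/-- Let `θ ∈ ℝ^n` with `V₋(θ) = V`, and let `τ 0 = 0 < τ 1 < ⋯ < τ k = n` be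
exactly the constant partition of `θ` (θ constant on each piece, adjacent
values distinct), with signs `w i = 1` if `θ (τ (i-1)) > θ (τ i)` and `w i = 0`
otherwise.  Then the cone
`T(Π, w) = {v : ∑ᵢ V₋^{B i}(v) ≤ ∑_{i=1}^{k-1} w i (v (τ i) - v (τ i - 1))}`
is contained in the tangent cone of `K₋(V) = {z : V₋(z) ≤ V}` at `θ`:
for every `v ∈ T(Π, w)` there exists `t > 0` with `θ + t v ∈ K₋(V)`. -/
theorem stmt_12 (n k : ℕ) (hn : 1 ≤ n) (hk : 1 ≤ k) (θ : ℕ → ℝ) (V : ℝ)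
    (hV : ∑ i ∈ Finset.range (n - 1), max (θ i - θ (i + 1)) 0 = V)
    (τ : ℕ → ℕ) (hτ0 : τ 0 = 0) (hτk : τ k = n) (hτmono : ∀ i < k, τ i < τ (i + 1))
    (hconst : ∀ i < k, ∀ a, τ i ≤ a → a < τ (i + 1) → θ a = θ (τ i))
    (hdistinct : ∀ i, 1 ≤ i → i < k → θ (τ (i - 1)) ≠ θ (τ i))
    (w : ℕ → ℝ)
    (hwsgn : ∀ i, 1 ≤ i → i < k → w i = if θ (τ (i - 1)) > θ (τ i) then 1 else 0) :
    ∀ v : ℕ → ℝ,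
      (∑ i ∈ Finset.range k,
          ∑ j ∈ Finset.Ico (τ i) (τ (i + 1) - 1), max (v j - v (j + 1)) 0
        ≤ ∑ i ∈ Finset.Ico 1 k, w i * (v (τ i) - v (τ i - 1))) →
      ∃ t : ℝ, 0 < t ∧
        ∑ i ∈ Finset.range (n - 1),
            max ((θ i + t * v i) - (θ (i + 1) + t * v (i + 1))) 0 ≤ V := by
  intro v hv
  -- monotonicity of τ
  have hmono : ∀ a b, a ≤ b → b ≤ k → τ a ≤ τ b := by
    intro a b hab hbk
    induction b with
    | zero =>
      have : a = 0 := Nat.le_zero.mp hab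
      simp [this]
    | succ b ih =>
      rcases eq_or_lt_of_le hab with h | h
      · simp [h]
      · exact (ih (by omega) (by omega)).trans (hτmono b (by omega)).le
  -- decomposition of the sum over range (n-1)
  have hsplit : ∀ f : ℕ → ℝ,
      ∑ j ∈ Finset.range (n - 1), f j
        = (∑ i ∈ Finset.range k, ∑ j ∈ Finset.Ico (τ i) (τ (i + 1) - 1), f j)
          + ∑ i ∈ Finset.Ico 1 k, f (τ i - 1) := by
    intro f
    have h1 : ∀ m, m ≤ k → ∑ j ∈ Finset.Ico 0 (τ m), f j
        = ∑ i ∈ Finset.range m, ∑ j ∈ Finset.Ico (τ i) (τ (i + 1)), f j := by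
      intro m hm
      induction m with
      | zero => simp [hτ0]
      | succ m ih =>
        rw [Finset.sum_range_succ, ← ih (by omega)]
        exact (Finset.sum_Ico_consecutive f
          (by simpa [hτ0] using hmono 0 m (Nat.zero_le m) (by omega))
          (hτmono m (by omega)).le).symm
    have h2 : ∀ i < k, ∑ j ∈ Finset.Ico (τ i) (τ (i + 1)), f j
        = (∑ j ∈ Finset.Ico (τ i) (τ (i + 1) - 1), f j) + f (τ (i + 1) - 1) := by
      intro i hi
      have h := hτmono i hi
      have hb : τ (i + 1) = (τ (i + 1) - 1) + 1 := by omega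
      have h2 := Finset.sum_Ico_succ_top (f := f) (a := τ i) (b := τ (i + 1) - 1) (by omega)
      rwa [← hb] at h2
    have h3 : ∑ j ∈ Finset.Ico 0 (τ k), f j
        = (∑ i ∈ Finset.range k, ∑ j ∈ Finset.Ico (τ i) (τ (i + 1) - 1), f j)
          + ∑ i ∈ Finset.range k, f (τ (i + 1) - 1) := by
      rw [h1 k le_rfl, ← Finset.sum_add_distrib]
      exact Finset.sum_congr rfl fun i hi => h2 i (Finset.mem_range.mp hi)
    have h4 : ∑ i ∈ Finset.range k, f (τ (i + 1) - 1)
        = (∑ i ∈ Finset.Ico 1 k, f (τ i - 1)) + f (τ k - 1) := by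
      have hk' : k = (k - 1) + 1 := by omega
      rw [hk', Finset.sum_range_succ, Finset.sum_Ico_eq_sum_range]
      simp only [Nat.add_sub_cancel]
      congr 1
      exact Finset.sum_congr rfl fun i _ => by rw [Nat.add_comm 1 i]
    have h5 : ∑ j ∈ Finset.Ico 0 (τ k), f j
        = (∑ j ∈ Finset.range (n - 1), f j) + f (n - 1) := by
      rw [hτk]
      have hn' : n = (n - 1) + 1 := by omega
      rw [hn', Finset.range_eq_Ico, ← Finset.sum_Ico_succ_top (Nat.zero_le _)]
      simp only [← hn']
    have : f (τ k - 1) = f (n - 1) := by rw [hτk]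
    linarith [h3, h4, h5]
  -- τ i ≥ 1 for i ≥ 1
  have hτpos : ∀ i, 1 ≤ i → i ≤ k → 1 ≤ τ i := by
    intro i hi hik
    have h0 : τ 0 < τ 1 := hτmono 0 (by omega)
    have h1 : τ 1 ≤ τ i := hmono 1 i hi hik
    omega
  -- choose t
  set ε : ℕ → ℝ := fun i => if 1 ≤ i ∧ i < k then
      |θ (τ (i - 1)) - θ (τ i)| / (|v (τ i - 1) - v (τ i)| + 1) else 1 with hε
  set t : ℝ := (Finset.range (k + 1)).inf' Finset.nonempty_range_add_one ε with ht
  have hεpos : ∀ i, 0 < ε i := by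
    intro i
    simp only [hε]
    split_ifs with h
    · apply div_pos
      · rw [abs_pos, sub_ne_zero]
        exact hdistinct i h.1 h.2
      · positivity
    · norm_num
  have ht0 : 0 < t := by
    rw [ht, Finset.lt_inf'_iff]
    exact fun i _ => hεpos i
  have htle : ∀ i, 1 ≤ i → i < k → t ≤ ε i := by
    intro i h1 h2
    apply Finset.inf'_le
    exact Finset.mem_range.mpr (by omega)
  have hkey : ∀ i, 1 ≤ i → i < k →
      t * |v (τ i - 1) - v (τ i)| ≤ |θ (τ (i - 1)) - θ (τ i)| := by
    intro i h1 h2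
    have h : t ≤ |θ (τ (i - 1)) - θ (τ i)| / (|v (τ i - 1) - v (τ i)| + 1) := by
      simpa [hε, h1, h2] using htle i h1 h2
    set D := |θ (τ (i - 1)) - θ (τ i)|
    set E := |v (τ i - 1) - v (τ i)|
    have hE : 0 ≤ E := abs_nonneg _
    have hD : 0 ≤ D := abs_nonneg _
    have h' : t * (E + 1) ≤ D := (le_div_iff₀ (by positivity)).mp h
    nlinarith [ht0]
  refine ⟨t, ht0, ?_⟩
  -- compute V
  have hVeq : V = ∑ i ∈ Finset.Ico 1 k, max (θ (τ (i - 1)) - θ (τ i)) 0 := by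
    rw [← hV, hsplit]
    have hb : ∀ i ∈ Finset.range k,
        ∑ j ∈ Finset.Ico (τ i) (τ (i + 1) - 1), max (θ j - θ (j + 1)) 0 = 0 := by
      intro i hi
      rw [Finset.mem_range] at hi
      apply Finset.sum_eq_zero
      intro j hj
      rw [Finset.mem_Ico] at hj
      have e1 : θ j = θ (τ i) := hconst i hi j hj.1 (by omega)
      have e2 : θ (j + 1) = θ (τ i) := hconst i hi (j + 1) (by omega) (by omega)
      rw [e1, e2]; simp
    rw [Finset.sum_congr rfl hb, Finset.sum_const, smul_zero, zero_add]
    apply Finset.sum_congr rfl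
    intro i hi
    rw [Finset.mem_Ico] at hi
    have hτi : 1 ≤ τ i := hτpos i hi.1 (by omega)
    have hi11 : i - 1 + 1 = i := by omega
    have hm : τ (i - 1) < τ i := by
      have h := hτmono (i - 1) (by omega); rwa [hi11] at h
    have e1 : θ (τ i - 1) = θ (τ (i - 1)) :=
      hconst (i - 1) (by omega) (τ i - 1) (by omega) (by rw [hi11]; omega)
    have e2 : τ i - 1 + 1 = τ i := by omega
    rw [e1, e2]
  -- compute perturbed sum
  rw [hsplit]
  -- block terms
  have hblock : ∀ i ∈ Finset.range k,
      ∑ j ∈ Finset.Ico (τ i) (τ (i + 1) - 1),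
          max ((θ j + t * v j) - (θ (j + 1) + t * v (j + 1))) 0
        = t * ∑ j ∈ Finset.Ico (τ i) (τ (i + 1) - 1), max (v j - v (j + 1)) 0 := by
    intro i hi
    rw [Finset.mem_range] at hi
    rw [Finset.mul_sum]
    apply Finset.sum_congr rfl
    intro j hj
    rw [Finset.mem_Ico] at hj
    have e1 : θ j = θ (τ i) := hconst i hi j hj.1 (by omega)
    have e2 : θ (j + 1) = θ (τ i) := hconst i hi (j + 1) (by omega) (by omega)
    rw [e1, e2, mul_max_of_nonneg _ _ ht0.le, mul_zero]
    ring_nf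
  -- boundary terms
  have hbnd : ∀ i ∈ Finset.Ico 1 k,
      max ((θ (τ i - 1) + t * v (τ i - 1)) - (θ (τ i - 1 + 1) + t * v (τ i - 1 + 1))) 0
        = max (θ (τ (i - 1)) - θ (τ i)) 0 - t * (w i * (v (τ i) - v (τ i - 1))) := by
    intro i hi
    rw [Finset.mem_Ico] at hi
    have hτi : 1 ≤ τ i := hτpos i hi.1 (by omega)
    have hi11 : i - 1 + 1 = i := by omega
    have hm : τ (i - 1) < τ i := by
      have h := hτmono (i - 1) (by omega); rwa [hi11] at h
    have e1 : θ (τ i - 1) = θ (τ (i - 1)) :=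
      hconst (i - 1) (by omega) (τ i - 1) (by omega) (by rw [hi11]; omega)
    have e2 : τ i - 1 + 1 = τ i := by omega
    have hK := hkey i hi.1 hi.2
    have habs : |t * (v (τ i - 1) - v (τ i))| ≤ |θ (τ (i - 1)) - θ (τ i)| := by
      rw [abs_mul, abs_of_pos ht0]; exact hK
    rw [e2, e1]
    set d := θ (τ (i - 1)) - θ (τ i) with hd
    set Δ := v (τ i - 1) - v (τ i) with hΔ
    have hw := hwsgn i hi.1 hi.2
    rcases lt_or_gt_of_ne (hdistinct i hi.1 hi.2) with hlt | hgt
    · -- d < 0, w = 0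
      have hw0 : w i = 0 := by rw [hw, if_neg (by linarith)]
      have hd0 : d < 0 := by rw [hd]; linarith
      have : (θ (τ (i - 1)) + t * v (τ i - 1)) - (θ (τ i) + t * v (τ i)) = d + t * Δ := by
        rw [hd, hΔ]; ring
      rw [this, hw0]
      have h1 : d + t * Δ ≤ 0 := by
        have := abs_le.mp habs
        rw [show t * (v (τ i - 1) - v (τ i)) = t * Δ from rfl] at this
        have := this.2
        rw [show |θ (τ (i - 1)) - θ (τ i)| = -d by rw [abs_of_neg hd0]] at this
        linarith
      rw [max_eq_right h1, max_eq_right hd0.le]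
      ring
    · -- d > 0, w = 1
      have hw1 : w i = 1 := by rw [hw, if_pos (by linarith)]
      have hd0 : 0 < d := by rw [hd]; linarith
      have heq : (θ (τ (i - 1)) + t * v (τ i - 1)) - (θ (τ i) + t * v (τ i)) = d + t * Δ := by
        rw [hd, hΔ]; ring
      rw [heq, hw1]
      have h1 : 0 ≤ d + t * Δ := by
        have h2 := abs_le.mp habs
        rw [show |θ (τ (i - 1)) - θ (τ i)| = d by rw [abs_of_pos hd0]] at h2
        have := h2.1
        have : -(d) ≤ t * Δ := by
          have := h2.1
          simpa using this
        linarith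
      rw [max_eq_left h1, max_eq_left hd0.le]
      rw [hΔ]; ring
  rw [Finset.sum_congr rfl hblock, Finset.sum_congr rfl hbnd, ← Finset.mul_sum,
    Finset.sum_sub_distrib, ← Finset.mul_sum, hVeq]
  nlinarith [ht0, hv]
end

section
/- Let θ* ∈ ℝ^n with V_-(θ*) > 0, let V ≥ 0, set α := V / V_-(θ*), and define θ' ∈ ℝ^n by θ'_1 = θ*_1 and θ'_i = θ*_1 + Σ_{j=1}^{i-1}(θ*_{j+1} - θ*_j)_+ - α Σ_{j=1}^{i-1}(θ*_j - θ*_{j+1})_+ for i ≥ 2. Then V_-(θ') = α V_-(θ*) = V, and (1/n)‖θ' - θ*‖_2² ≤ (1-α)² (V_-(θ*))² = (V - V_-(θ*))². -/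
/-- Let `θ* ∈ ℝ^n` with `V₋(θ*) > 0`, let `V ≥ 0`, set `α = V / V₋(θ*)` and
define `θ'` by `θ' i = θ* 0 + ∑_{j<i} (θ* (j+1) - θ* j)₊ - α ∑_{j<i} (θ* j - θ* (j+1))₊`.
Then `V₋(θ') = α V₋(θ*) = V` and
`(1/n) ‖θ' - θ*‖₂² ≤ (1-α)² V₋(θ*)² = (V - V₋(θ*))²`. -/
theorem stmt_16 (n : ℕ) (hn : 1 ≤ n) (θstar θ' : ℕ → ℝ) (V α : ℝ) (hV : 0 ≤ V)
    (hpos : 0 < ∑ i ∈ Finset.range (n - 1), max (θstar i - θstar (i + 1)) 0)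
    (hα : α = V / ∑ i ∈ Finset.range (n - 1), max (θstar i - θstar (i + 1)) 0)
    (hθ' : ∀ i, θ' i = θstar 0
      + (∑ j ∈ Finset.range i, max (θstar (j + 1) - θstar j) 0)
      - α * ∑ j ∈ Finset.range i, max (θstar j - θstar (j + 1)) 0) :
    (∑ i ∈ Finset.range (n - 1), max (θ' i - θ' (i + 1)) 0
        = α * ∑ i ∈ Finset.range (n - 1), max (θstar i - θstar (i + 1)) 0) ∧
    (∑ i ∈ Finset.range (n - 1), max (θ' i - θ' (i + 1)) 0 = V) ∧
    ((1 / (n : ℝ)) * ∑ i ∈ Finset.range n, (θ' i - θstar i) ^ 2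
        ≤ (1 - α) ^ 2 * (∑ i ∈ Finset.range (n - 1), max (θstar i - θstar (i + 1)) 0) ^ 2) ∧
    ((1 - α) ^ 2 * (∑ i ∈ Finset.range (n - 1), max (θstar i - θstar (i + 1)) 0) ^ 2
        = (V - ∑ i ∈ Finset.range (n - 1), max (θstar i - θstar (i + 1)) 0) ^ 2) := by
  set S := ∑ i ∈ Finset.range (n - 1), max (θstar i - θstar (i + 1)) 0 with hS
  have hαnn : 0 ≤ α := by rw [hα]; exact div_nonneg hV hpos.le
  -- termwise identity
  have hterm : ∀ i, max (θ' i - θ' (i + 1)) 0 = α * max (θstar i - θstar (i + 1)) 0 := by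
    intro i
    have h1 : θ' i - θ' (i + 1)
        = α * max (θstar i - θstar (i + 1)) 0 - max (θstar (i + 1) - θstar i) 0 := by
      rw [hθ' i, hθ' (i + 1), Finset.sum_range_succ, Finset.sum_range_succ]
      ring
    rw [h1]
    rcases le_total (θstar i - θstar (i + 1)) 0 with h | h
    · rw [max_eq_right h, max_eq_right]
      · ring
      have : 0 ≤ max (θstar (i + 1) - θstar i) 0 := le_max_right _ _
      nlinarith
    · rw [max_eq_left h]
      have h2 : θstar (i + 1) - θstar i ≤ 0 := by linarith
      rw [max_eq_right h2]
      rw [max_eq_left]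
      · ring
      nlinarith
  have h1 : ∑ i ∈ Finset.range (n - 1), max (θ' i - θ' (i + 1)) 0 = α * S := by
    rw [Finset.mul_sum]
    exact Finset.sum_congr rfl fun i _ => hterm i
  have h2 : α * S = V := by
    rw [hα]; field_simp
  -- difference identity
  have hdiff : ∀ i, θ' i - θstar i
      = (1 - α) * ∑ j ∈ Finset.range i, max (θstar j - θstar (j + 1)) 0 := by
    intro i
    have htel : θstar i = θstar 0 + ∑ j ∈ Finset.range i, (θstar (j + 1) - θstar j) := by
      rw [Finset.sum_range_sub]; ring
    have hsplit : ∑ j ∈ Finset.range i, (θstar (j + 1) - θstar j)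
        = ∑ j ∈ Finset.range i, max (θstar (j + 1) - θstar j) 0
          - ∑ j ∈ Finset.range i, max (θstar j - θstar (j + 1)) 0 := by
      rw [← Finset.sum_sub_distrib]
      refine Finset.sum_congr rfl fun j _ => ?_
      rcases le_total (θstar (j + 1) - θstar j) 0 with h | h
      · rw [max_eq_right h, max_eq_left (by linarith)]; ring
      · rw [max_eq_left h, max_eq_right (by linarith)]; ring
    rw [hθ' i, htel, hsplit]; ring
  -- bound each square
  have hbound : ∀ i ∈ Finset.range n, (θ' i - θstar i) ^ 2 ≤ (1 - α) ^ 2 * S ^ 2 := by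
    intro i hi
    rw [Finset.mem_range] at hi
    have hle : ∑ j ∈ Finset.range i, max (θstar j - θstar (j + 1)) 0 ≤ S := by
      apply Finset.sum_le_sum_of_subset_of_nonneg
      · exact Finset.range_subset_range.2 (by omega)
      · intro j _ _; exact le_max_right _ _
    have hnn : 0 ≤ ∑ j ∈ Finset.range i, max (θstar j - θstar (j + 1)) 0 :=
      Finset.sum_nonneg fun j _ => le_max_right _ _
    rw [hdiff i, mul_pow]
    have : (∑ j ∈ Finset.range i, max (θstar j - θstar (j + 1)) 0) ^ 2 ≤ S ^ 2 := by
      nlinarith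
    nlinarith [sq_nonneg (1 - α)]
  refine ⟨h1, h1.trans h2, ?_, ?_⟩
  · have hsum : ∑ i ∈ Finset.range n, (θ' i - θstar i) ^ 2 ≤ n * ((1 - α) ^ 2 * S ^ 2) := by
      calc ∑ i ∈ Finset.range n, (θ' i - θstar i) ^ 2
          ≤ ∑ _i ∈ Finset.range n, (1 - α) ^ 2 * S ^ 2 := Finset.sum_le_sum hbound
        _ = n * ((1 - α) ^ 2 * S ^ 2) := by
            rw [Finset.sum_const, Finset.card_range, nsmul_eq_mul]
    have hn' : (0 : ℝ) < n := by positivity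
    rw [div_mul_eq_mul_div, one_mul, div_le_iff₀ hn']
    linarith [hsum]
  · have : α * S = V := h2
    nlinarith
end

section
/- Let θ ∈ ℝ^n be k-piecewise constant with constant partition (A_1, …, A_k) and associated signs w_1, …, w_{k+1} ∈ {0,1} (w_1 = w_{k+1} = 0, and for 2 ≤ i ≤ k, w_i = 1 iff the value on A_{i-1} exceeds the value on A_i). Define M(θ) := Σ_{j=2}^{k} max(1/|A_j|, k/n)·1_{{w_{j-1} ≠ w_j}}. If θ is m-piecewise monotone, then the number of sign changes Σ_{j=2}^{k} 1_{{w_{j-1} ≠ w_j}} is at most 2(m-1); consequently, if additionally every piece A_j with w_{j-1} ≠ w_j satisfies |A_j| ≥ c·n/k for some c > 0, then M(θ) ≤ 2 max(1, c^{-1})·(m-1)·k/n. -/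
/-- Let `θ ∈ ℝ^n` be `k`-piecewise constant with constant partition given by
breakpoints `τ 0 = 0 < ⋯ < τ k = n` (values distinct on adjacent pieces), with
signs `s 0 = s k = 0` and, for `1 ≤ i < k`, `s i = 1` iff the value on piece
`i-1` exceeds the value on piece `i`.  If `θ` is `m`-piecewise monotone (via
breakpoints `σp`), then the number of sign changes is at most `2(m-1)`;
consequently if every piece `A j` at a sign change has `|A j| ≥ c n / k` for
some `c > 0`, then
`M(θ) = ∑ max(1/|A j|, k/n) 1{sign change} ≤ 2 max(1, c⁻¹) (m-1) k / n`. -/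
theorem stmt_19 (n k m : ℕ) (hn : 1 ≤ n) (hk : 1 ≤ k) (hm : 1 ≤ m)
    (θ : ℕ → ℝ) (τ : ℕ → ℕ)
    (hτ0 : τ 0 = 0) (hτk : τ k = n) (hτmono : ∀ i < k, τ i < τ (i + 1))
    (hconst : ∀ i < k, ∀ a, τ i ≤ a → a < τ (i + 1) → θ a = θ (τ i))
    (hdistinct : ∀ i, 1 ≤ i → i < k → θ (τ (i - 1)) ≠ θ (τ i))
    (s : ℕ → ℕ) (hs0 : s 0 = 0) (hsk : s k = 0)
    (hsgn : ∀ i, 1 ≤ i → i < k → s i = if θ (τ (i - 1)) > θ (τ i) then 1 else 0)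
    (σp : ℕ → ℕ) (hσ0 : σp 0 = 0) (hσm : σp m = n) (hσmono : ∀ i < m, σp i < σp (i + 1))
    (hσmonotone : ∀ i < m, ∀ a b, σp i ≤ a → a ≤ b → b < σp (i + 1) → θ a ≤ θ b) :
    ((Finset.range (k - 1)).filter (fun j => s j ≠ s (j + 1))).card ≤ 2 * (m - 1) ∧
    ∀ c : ℝ, 0 < c →
      (∀ j ∈ Finset.range (k - 1), s j ≠ s (j + 1) →
        c * n / k ≤ ((τ (j + 2) - τ (j + 1) : ℕ) : ℝ)) →
      (∑ j ∈ Finset.range (k - 1),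
          if s j ≠ s (j + 1) then
            max (1 / ((τ (j + 2) - τ (j + 1) : ℕ) : ℝ)) ((k : ℝ) / n) else 0)
        ≤ 2 * max 1 c⁻¹ * ((m - 1 : ℕ) : ℝ) * k / n := by
  classical
  -- τ is strictly monotone up to k
  have hτsm : ∀ i j, i < j → j ≤ k → τ i < τ j := by
    intro i j hij hjk
    induction j with
    | zero => omega
    | succ j ih =>
      rcases Nat.lt_succ_iff_lt_or_eq.mp hij with h | h
      · exact lt_trans (ih h (by omega)) (hτmono j (by omega))
      · subst h; exact hτmono i (by omega)
  -- existence of monotone piece containing a point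
  have hexists : ∀ a, a < n → ∃ l, l < m ∧ σp l ≤ a ∧ a < σp (l + 1) := by
    intro a ha
    set L := (Finset.range (m + 1)).filter (fun l => σp l ≤ a) with hL
    have hne : L.Nonempty := ⟨0, by simp [hL, hσ0]⟩
    set l := L.max' hne with hl
    have hmem := Finset.mem_filter.mp (L.max'_mem hne)
    have hlt : l < m + 1 := Finset.mem_range.mp hmem.1
    have hle : σp l ≤ a := hmem.2
    have hlm : l ≠ m := by
      intro h; rw [h, hσm] at hle; omega
    refine ⟨l, by omega, hle, ?_⟩
    by_contra hcon
    push_neg at hcon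
    have hmem2 : l + 1 ∈ L := by
      rw [hL]
      exact Finset.mem_filter.mpr ⟨Finset.mem_range.mpr (by omega), hcon⟩
    have := L.le_max' _ hmem2
    omega
  -- descents correspond to monotone-piece boundaries
  have hdes : ∀ i, 1 ≤ i → i < k → s i ≠ 0 → ∃ l, 1 ≤ l ∧ l ≤ m - 1 ∧ σp l = τ i := by
    intro i h1 hik hs
    have hsi := hsgn i h1 hik
    have hgt : θ (τ (i - 1)) > θ (τ i) := by
      by_contra h
      rw [if_neg h] at hsi; exact hs hsi
    have hti1 : τ (i - 1) < τ i := hτsm (i - 1) i (by omega) (by omega)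
    have htin : τ i < n := by
      have := hτsm i k hik le_rfl; omega
    obtain ⟨l, hlm, hla, hal⟩ := hexists (τ i - 1) (by omega)
    have hba : σp (l + 1) ≤ τ i := by
      by_contra hb
      push_neg at hb
      have hmon := hσmonotone l hlm (τ i - 1) (τ i) hla (by omega) hb
      have heq := hconst (i - 1) (by omega) (τ i - 1) (by omega)
        (by rw [show i - 1 + 1 = i by omega]; omega)
      rw [heq] at hmon
      linarith
    have hσl : σp (l + 1) = τ i := by omega
    have hlm1 : l + 1 ≠ m := by
      intro h; rw [h, hσm] at hσl; omega
    exact ⟨l + 1, by omega, by omega, hσl⟩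
  -- the set of ones
  set O := (Finset.range k).filter (fun i => s i ≠ 0) with hO
  have hOcard : O.card ≤ m - 1 := by
    have h1 : O.card ≤ ((Finset.Icc 1 (m - 1)).image σp).card := by
      apply Finset.card_le_card_of_injOn τ
      · intro i hi
        simp only [hO, Finset.mem_coe, Finset.mem_filter, Finset.mem_range] at hi
        have hi1 : 1 ≤ i := by
          rcases Nat.eq_zero_or_pos i with h | h
          · exfalso; exact hi.2 (h ▸ hs0)
          · exact h
        obtain ⟨l, hl1, hl2, hl3⟩ := hdes i hi1 hi.1 hi.2
        exact Finset.mem_image.mpr ⟨l, Finset.mem_Icc.mpr ⟨hl1, hl2⟩, hl3⟩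
      · intro i hi j hj hij
        simp only [hO, Finset.coe_filter, Set.mem_setOf_eq, Finset.mem_range] at hi hj
        rcases lt_trichotomy i j with h | h | h
        · exact absurd hij (ne_of_lt (hτsm i j h (by omega)))
        · exact h
        · exact absurd hij.symm (ne_of_lt (hτsm j i h (by omega)))
    calc O.card ≤ _ := h1
      _ ≤ (Finset.Icc 1 (m - 1)).card := Finset.card_image_le
      _ = m - 1 := by rw [Nat.card_Icc]; omega
  -- sign changes bounded by 2 * ones
  set C := (Finset.range (k - 1)).filter (fun j => s j ≠ s (j + 1)) with hC
  have hCO : C.card ≤ 2 * O.card := by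
    set g : ℕ → ℕ := fun j => if s (j + 1) ≠ 0 then j + 1 else j with hg
    have himg : C.image g ⊆ O := by
      intro a ha
      obtain ⟨j, hj, hja⟩ := Finset.mem_image.mp ha
      simp only [hC, Finset.mem_filter, Finset.mem_range] at hj
      simp only [hO, Finset.mem_filter, Finset.mem_range]
      by_cases h : s (j + 1) ≠ 0
      · rw [hg] at hja; simp only [if_pos h] at hja; subst hja
        exact ⟨by omega, h⟩
      · rw [hg] at hja; simp only [if_neg h] at hja; subst hja
        push_neg at h
        exact ⟨by omega, fun h0 => hj.2 (by rw [h0, h])⟩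
    have h1 : C.card ≤ 2 * (C.image g).card := by
      apply Finset.card_le_mul_card_image (f := g) C 2
      intro a _
      have hsub : (C.filter fun x => g x = a) ⊆ {a - 1, a} := by
        intro j hj
        have hgj := (Finset.mem_filter.mp hj).2
        rw [hg] at hgj
        by_cases h : s (j + 1) ≠ 0
        · simp only [if_pos h] at hgj
          simp only [Finset.mem_insert, Finset.mem_singleton]; omega
        · simp only [if_neg h] at hgj
          simp only [Finset.mem_insert, Finset.mem_singleton]; omega
      calc (C.filter fun x => g x = a).card ≤ _ := Finset.card_le_card hsub
        _ ≤ 2 := (Finset.card_insert_le _ _).trans (by simp)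
    calc C.card ≤ 2 * (C.image g).card := h1
      _ ≤ 2 * O.card := by
        have := Finset.card_le_card himg; omega
  have hCcard : C.card ≤ 2 * (m - 1) := by omega
  refine ⟨hCcard, ?_⟩
  -- second part
  intro c hc hA
  have hn' : (0 : ℝ) < n := by exact_mod_cast hn
  have hk' : (0 : ℝ) < k := by exact_mod_cast hk
  set X : ℝ := max 1 c⁻¹ * ((k : ℝ) / n) with hX
  have hX0 : 0 ≤ X := by
    apply mul_nonneg
    · exact le_trans zero_le_one (le_max_left _ _)
    · positivity
  have hterm : ∀ j ∈ Finset.range (k - 1),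
      (if s j ≠ s (j + 1) then
          max (1 / ((τ (j + 2) - τ (j + 1) : ℕ) : ℝ)) ((k : ℝ) / n) else 0)
        ≤ (if s j ≠ s (j + 1) then X else 0) := by
    intro j hj
    by_cases h : s j ≠ s (j + 1)
    · rw [if_pos h, if_pos h]
      have hAj := hA j hj h
      have hAj0 : (0 : ℝ) < ((τ (j + 2) - τ (j + 1) : ℕ) : ℝ) := by
        have : (0 : ℝ) < c * n / k := by positivity
        linarith
      apply max_le
      · have h1 : 1 / ((τ (j + 2) - τ (j + 1) : ℕ) : ℝ) ≤ 1 / (c * n / k) := by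
          apply one_div_le_one_div_of_le
          · positivity
          · exact hAj
        have h2 : 1 / (c * n / k) = c⁻¹ * ((k : ℝ) / n) := by
          field_simp
        rw [h2] at h1
        apply le_trans h1
        apply mul_le_mul_of_nonneg_right (le_max_right _ _)
        positivity
      · calc (k : ℝ) / n = 1 * ((k : ℝ) / n) := by ring
          _ ≤ X := by
            apply mul_le_mul_of_nonneg_right (le_max_left _ _)
            positivity
    · rw [if_neg h, if_neg h]
  calc (∑ j ∈ Finset.range (k - 1),
          if s j ≠ s (j + 1) then
            max (1 / ((τ (j + 2) - τ (j + 1) : ℕ) : ℝ)) ((k : ℝ) / n) else 0)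
      ≤ ∑ j ∈ Finset.range (k - 1), (if s j ≠ s (j + 1) then X else 0) :=
        Finset.sum_le_sum hterm
    _ = C.card * X := by
        rw [hC, ← Finset.sum_filter, Finset.sum_const, nsmul_eq_mul]
    _ ≤ (2 * (m - 1) : ℕ) * X := by
        apply mul_le_mul_of_nonneg_right _ hX0
        exact_mod_cast hCcard
    _ = 2 * max 1 c⁻¹ * ((m - 1 : ℕ) : ℝ) * k / n := by
        push_cast
        rw [hX]
        ring
end
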